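/- Let $\Theta \in [0, \pi)$ be fixed and let $0 < r_0 < 1$. For $r > 0$ define $d(r) = \sqrt{r_0^2 + r^2 + 2 r_0 r \cos\Theta}$ and suppose $d(r) + r < 1$. Let $g(r) = \coth\left(\operatorname{artanh}(d(r) + r) - \operatorname{artanh}(d(r) - r)\right)$ be the geodesic curvature of the hyperbolic circle corresponding to the Euclidean circle of radius $r$ centered at distance $d(r)$ from the origin. Then $g'(r) < 0$. -/

import Mathlib

open Real

/-- Inverse hyperbolic tangent. -/
noncomputable def artanh (x : ℝ) : ℝ := (1 / 2) * Real.log ((1 + x) / (1 - x))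

lemma exp_two_artanh {x : ℝ} (h1 : -1 < x) (h2 : x < 1) :
    Real.exp (_root_.artanh x + _root_.artanh x) * (1 - x) = 1 + x := by
  have hu : 0 < (1 + x) / (1 - x) := div_pos (by linarith) (by linarith)
  rw [show _root_.artanh x + _root_.artanh x = Real.log ((1 + x) / (1 - x)) by rw [_root_.artanh]; ring,
    Real.exp_log hu, div_mul_cancel₀]
  linarith

lemma coth_artanh_sub {a b : ℝ} (ha1 : -1 < a) (ha2 : a < 1) (hb1 : -1 < b) (hb2 : b < 1)
    (hab : b < a) :
    Real.cosh (_root_.artanh a - _root_.artanh b) / Real.sinh (_root_.artanh a - _root_.artanh b)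
      = (1 - a * b) / (a - b) := by
  set ρ := _root_.artanh a - _root_.artanh b with hρ
  have hP := exp_two_artanh ha1 ha2
  have hQ := exp_two_artanh hb1 hb2
  have hQpos : 0 < Real.exp (_root_.artanh b + _root_.artanh b) := Real.exp_pos _
  have hEe : Real.exp ρ * Real.exp (-ρ) = 1 := by
    rw [← Real.exp_add]; simp
  have hE2 : Real.exp ρ * Real.exp ρ * ((1 - a) * (1 + b)) = (1 + a) * (1 - b) := by
    have hsplit : Real.exp ρ * Real.exp ρ
        = Real.exp (_root_.artanh a + _root_.artanh a) / Real.exp (_root_.artanh b + _root_.artanh b) := by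
      rw [← Real.exp_add, ← Real.exp_sub, hρ]; ring_nf
    rw [hsplit]
    rw [div_mul_eq_mul_div, div_eq_iff hQpos.ne']
    linear_combination (1 + b) * hP - (1 + a) * hQ
  -- key relation : exp ρ * (1-a)*(1+b) = exp (-ρ) * (1+a)*(1-b)
  have h0 : Real.exp ρ * ((1 - a) * (1 + b)) = Real.exp (-ρ) * ((1 + a) * (1 - b)) := by
    linear_combination Real.exp (-ρ) * hE2 - Real.exp ρ * ((1 - a) * (1 + b)) * hEe
  -- sinh ρ > 0
  have hD : 0 < (1 - a) * (1 + b) := by nlinarith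
  have hN : 0 < (1 + a) * (1 - b) := by nlinarith
  have hE1 : 1 < Real.exp ρ * Real.exp ρ := by
    have hkey : (Real.exp ρ * Real.exp ρ - 1) * ((1 - a) * (1 + b))
        = (1 + a) * (1 - b) - (1 - a) * (1 + b) := by linear_combination hE2
    nlinarith [hkey, hD]
  have hEgt : 1 < Real.exp ρ := by nlinarith [Real.exp_pos ρ]
  have heneg : Real.exp (-ρ) < 1 := by nlinarith [Real.exp_pos (-ρ)]
  have hsinh : 0 < Real.sinh ρ := by
    rw [Real.sinh_eq]; linarith
  rw [div_eq_div_iff (ne_of_gt hsinh) (ne_of_gt (by linarith : (0:ℝ) < a - b))]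
  rw [Real.cosh_eq, Real.sinh_eq]
  linear_combination (-(1:ℝ)/2) * h0

/-- In the hyperbolic-circle regime, the geodesic curvature
`g(r) = coth(artanh(d(r)+r) - artanh(d(r)-r))` has negative derivative. -/
theorem stmt_7 (Θ r₀ : ℝ) (hΘ : Θ ∈ Set.Ico 0 π) (hr₀ : 0 < r₀) (hr₀1 : r₀ < 1) :
    let d : ℝ → ℝ := fun r => Real.sqrt (r₀ ^ 2 + r ^ 2 + 2 * r₀ * r * Real.cos Θ)
    let g : ℝ → ℝ := fun r =>
      Real.cosh (_root_.artanh (d r + r) - _root_.artanh (d r - r)) /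
        Real.sinh (_root_.artanh (d r + r) - _root_.artanh (d r - r))
    ∀ r : ℝ, 0 < r → d r + r < 1 → deriv g r < 0 := by
  intro d g r hr hlt
  have hcos1 : Real.cos Θ ≤ 1 := Real.cos_le_one Θ
  have hcos2 : -1 ≤ Real.cos Θ := Real.neg_one_le_cos Θ
  have hdsq : ∀ s : ℝ, d s ^ 2 = r₀ ^ 2 + s ^ 2 + 2 * r₀ * s * Real.cos Θ := by
    intro s
    apply Real.sq_sqrt
    nlinarith [sq_nonneg (r₀ - s), sq_nonneg (r₀ + s)]
  have hd0 : ∀ s : ℝ, 0 ≤ d s := fun s => Real.sqrt_nonneg _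
  have hcont : Continuous fun s : ℝ => d s + s := by
    simp only [d]
    exact (Real.continuous_sqrt.comp (by continuity)).add continuous_id
  have hev : ∀ᶠ s in nhds r, 0 < s ∧ d s + s < 1 := by
    have h1 : ∀ᶠ s in nhds r, 0 < s := eventually_gt_nhds hr
    have h2 : ∀ᶠ s in nhds r, d s + s < 1 := by
      have hmem : (fun s : ℝ => d s + s) ⁻¹' Set.Iio 1 ∈ nhds r :=
        (isOpen_Iio.preimage hcont).mem_nhds hlt
      exact Filter.eventually_of_mem hmem fun s hs => hs
    exact h1.and h2
  have heq : g =ᶠ[nhds r] fun s => (1 - r₀ ^ 2) / (2 * s) - r₀ * Real.cos Θ := by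
    filter_upwards [hev] with s hs
    obtain ⟨hs0, hs1⟩ := hs
    have hds := hd0 s
    have hslt1 : s < 1 := by linarith
    have key := coth_artanh_sub (a := d s + s) (b := d s - s)
      (by linarith) hs1 (by linarith) (by linarith) (by linarith)
    show Real.cosh _ / Real.sinh _ = _
    rw [key]
    have h2s : (2:ℝ) * s ≠ 0 := by positivity
    rw [show d s + s - (d s - s) = 2 * s by ring]
    field_simp
    nlinarith [hdsq s]
  rw [heq.deriv_eq]
  have hφ : HasDerivAt (fun s : ℝ => (1 - r₀ ^ 2) / (2 * s) - r₀ * Real.cos Θ)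
      (-(1 - r₀ ^ 2) / (2 * r ^ 2)) r := by
    have h1 : HasDerivAt (fun s : ℝ => s⁻¹) (-(r ^ 2)⁻¹) r := hasDerivAt_inv (ne_of_gt hr)
    have h2 := (h1.const_mul ((1 - r₀ ^ 2) / 2)).sub_const (r₀ * Real.cos Θ)
    refine (h2.congr_deriv ?_).congr_of_eventuallyEq (Filter.Eventually.of_forall fun s => ?_)
    · simp only [div_eq_mul_inv, mul_inv]
      ring
    · simp only [div_eq_mul_inv, mul_inv]
      ring
  rw [hφ.deriv]
  have h01 : 0 < 1 - r₀ ^ 2 := by nlinarith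
  apply div_neg_of_neg_of_pos
  · linarith
  · positivity
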